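/- arXiv:2211.01826 — 2 statements merged into one kernel-verified Lean document; each statement's English description precedes it below -/
import Mathlib

section
/- Every morphism of the category Lens that is both an epimorphism and a monomorphism is an isomorphism. -/
universe u

open CategoryTheory CategoryTheory.Limits

namespace LensPaper

section OutDefs

variable {A : Type*} [Category A] {B : Type*} [Category B] {C : Type*} [Category C]

/-- The "out-set" of an object: the collection of all morphisms out of `X`,
bundled with their targets. -/
def Out (X : A) : Type _ := Σ Y : A, X ⟶ Y

/-- The identity element of an out-set. -/
def Out.id (X : A) : Out X := ⟨X, 𝟙 X⟩

/-- Composition of a morphism out of `X` with a morphism out of its target. -/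
def Out.comp {X : A} (u : Out X) (v : Out u.1) : Out X := ⟨v.1, u.2 ≫ v.2⟩

/-- Transport of out-sets along an equality of objects. -/
def Out.cast {X Y : A} (h : X = Y) (u : Out X) : Out Y := ⟨u.1, eqToHom h.symm ≫ u.2⟩

@[simp] theorem Out.cast_rfl {X : A} (u : Out X) : Out.cast rfl u = u := by
  cases u; simp [Out.cast]; rfl

theorem Out.cast_cast {X Y Z : A} (h₁ : X = Y) (h₂ : Y = Z) (u : Out X) :
    Out.cast h₂ (Out.cast h₁ u) = Out.cast (h₁.trans h₂) u := by
  subst h₁; subst h₂; simp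

/-- The action of a functor on out-sets. -/
def mapOut (F : A ⥤ B) {X : A} (u : Out X) : Out (F.obj X) := ⟨F.obj u.1, F.map u.2⟩

theorem mapOut_cast (F : A ⥤ B) {X Y : A} (h : X = Y) (u : Out X) :
    mapOut F (Out.cast h u) = Out.cast (congrArg F.obj h) (mapOut F u) := by
  subst h; simp

/-- The set of all morphisms of a category, bundled with their endpoints. -/
def Mor (A : Type*) [Category A] : Type _ := Σ (X Y : A), X ⟶ Y

/-- The action of a functor on morphisms, as a function on bundled morphisms. -/
def mapMor (F : A ⥤ B) : Mor A → Mor B := fun m => ⟨F.obj m.1, F.obj m.2.1, F.map m.2.2⟩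

/-- The set of composable pairs of morphisms of a category. -/
def CompPair (A : Type*) [Category A] : Type _ := Σ (X Y Z : A), (X ⟶ Y) × (Y ⟶ Z)

/-- The action of a functor on composable pairs. -/
def mapCompPair (F : A ⥤ B) : CompPair A → CompPair B :=
  fun p => ⟨F.obj p.1, F.obj p.2.1, F.obj p.2.2.1, (F.map p.2.2.2.1, F.map p.2.2.2.2)⟩

/-- A functor is a discrete opfibration if every morphism out of `F.obj X`
has a unique lift to a morphism out of `X`. -/
def IsDiscreteOpfibration (F : A ⥤ B) : Prop :=
  ∀ (X : A) (u : Out (F.obj X)), ∃! v : Out X, mapOut F v = u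

/-- A cosieve is an injective-on-objects discrete opfibration. -/
def IsCosieve (F : A ⥤ B) : Prop :=
  IsDiscreteOpfibration F ∧ Function.Injective F.obj

end OutDefs

/-- An (asymmetric delta) lens: a get functor together with put functions
satisfying PutGet, PutId and PutPut. -/
structure DLens (A : Type*) (B : Type*) [Category A] [Category B] where
  get : A ⥤ B
  put : ∀ (X : A), Out (get.obj X) → Out X
  putGet : ∀ (X : A) (u : Out (get.obj X)), mapOut get (put X u) = u
  putId : ∀ (X : A), put X (Out.id (get.obj X)) = Out.id X
  putPut : ∀ (X : A) (u : Out (get.obj X)) (v : Out u.1) (h : u.1 = get.obj (put X u).1),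
      put X (u.comp v) = (put X u).comp (put (put X u).1 (Out.cast h v))

namespace DLens

variable {A : Type*} [Category A] {B : Type*} [Category B] {C : Type*} [Category C]

theorem put_cast (F : DLens A B) {X₁ X₂ : A} (e : X₁ = X₂) (u : Out (F.get.obj X₁)) :
    Out.cast e (F.put X₁ u) = F.put X₂ (Out.cast (congrArg F.get.obj e) u) := by
  subst e; simp

/-- The identity lens. -/
def id (A : Type*) [Category A] : DLens A A where
  get := Functor.id A
  put X u := u
  putGet X u := rfl
  putId X := rfl
  putPut X u v h := by
    have hv : Out.cast h v = v := Out.cast_rfl v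
    rw [hv]

/-- Composition of lenses. -/
def comp (F : DLens A B) (G : DLens B C) : DLens A C where
  get := F.get ⋙ G.get
  put X u := F.put X (G.put (F.get.obj X) u)
  putGet X u := by
    show mapOut G.get (mapOut F.get (F.put X (G.put (F.get.obj X) u))) = u
    rw [F.putGet, G.putGet]
  putId X := by
    show F.put X (G.put (F.get.obj X) (Out.id (G.get.obj (F.get.obj X)))) = Out.id X
    rw [G.putId, F.putId]
  putPut X u v h := by
    have h₁ : u.1 = G.get.obj (G.put (F.get.obj X) u).1 :=
      (congrArg Sigma.fst (G.putGet (F.get.obj X) u)).symm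
    show F.put X (G.put (F.get.obj X) (u.comp v)) = _
    rw [G.putPut (F.get.obj X) u v h₁]
    have h₂ : (G.put (F.get.obj X) u).1 =
        F.get.obj (F.put X (G.put (F.get.obj X) u)).1 :=
      (congrArg Sigma.fst (F.putGet X (G.put (F.get.obj X) u))).symm
    rw [F.putPut X (G.put (F.get.obj X) u) _ h₂]
    rw [put_cast G h₂, Out.cast_cast]

end DLens

/-- The category of small categories and (asymmetric delta) lenses. -/
def LensCat : Type (u + 1) := Cat.{u, u}

/-- Regard a small category as an object of the category of lenses. -/
def LensCat.of (C : Cat.{u, u}) : LensCat.{u} := C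

/-- The underlying small category of an object of the category of lenses. -/
def LensCat.toCat (A : LensCat.{u}) : Cat.{u, u} := A

instance : Category.{u} LensCat.{u} where
  Hom A B := DLens A.toCat B.toCat
  id A := DLens.id A.toCat
  comp F G := F.comp G
  id_comp F := rfl
  comp_id F := rfl
  assoc F G H := rfl

/-- The get functor of a lens, i.e. a morphism of `LensCat` regarded as a `DLens`. -/
def LensCat.get {A B : LensCat.{u}} (F : A ⟶ B) : A.toCat ⟶ B.toCat := (DLens.get F).toCatHom

/-- The identity-on-objects forgetful functor from the category of lenses to the
category of small categories and functors, sending a lens to its get functor. -/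
def lensForget : LensCat.{u} ⥤ Cat.{u, u} where
  obj A := A.toCat
  map F := (DLens.get F).toCatHom
  map_id A := rfl
  map_comp F G := rfl

end LensPaper
open CategoryTheory CategoryTheory.Limits LensPaper
namespace LensPaper

section Helpers

variable {A : Type*} [Category A] {B : Type*} [Category B]

theorem Out.ext' {X : A} {u v : Out X} (h1 : u.1 = v.1)
    (h2 : u.2 ≫ eqToHom h1 = v.2) : u = v := by
  obtain ⟨a, f⟩ := u
  obtain ⟨b, g⟩ := v
  dsimp at h1
  subst h1
  simp only [eqToHom_refl, Category.comp_id] at h2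
  rw [h2]

theorem Out.snd_eq {X : A} {u v : Out X} (h : u = v) :
    u.2 ≫ eqToHom (congrArg Sigma.fst h) = v.2 := by
  subst h; simp

theorem Out.heq_iff {X Y : A} (h : X = Y) (u : Out X) (u' : Out Y) (hu : HEq u u') :
    u' = Out.cast h u := by
  subst h
  rw [eq_of_heq hu, Out.cast_rfl]

theorem Out.cast_comp {X Y : A} (h : X = Y) (u : Out X) (v : Out u.1) :
    (Out.cast h u).comp v = Out.cast h (u.comp v) := by
  simp [Out.cast, Out.comp, Category.assoc]; rfl

@[simp] theorem mapOut_id {X : A} (F : A ⥤ B) : mapOut F (Out.id X) = Out.id (F.obj X) := by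
  simp [mapOut, Out.id]; rfl

theorem mapOut_comp (F : A ⥤ B) {X : A} (u : Out X) (v : Out u.1) :
    mapOut F (u.comp v) = (mapOut F u).comp (mapOut F v) := by
  simp [mapOut, Out.comp]; rfl

/-- Extensionality for lenses. -/
theorem DLens.ext' {F G : DLens A B} (hget : F.get = G.get)
    (hput : ∀ (X : A) (u : Out (F.get.obj X)) (u' : Out (G.get.obj X)),
      HEq u u' → F.put X u = G.put X u') : F = G := by
  obtain ⟨g₁, p₁, _, _, _⟩ := F
  obtain ⟨g₂, p₂, _, _, _⟩ := G
  dsimp at hget hput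
  subst hget
  have : p₁ = p₂ := by
    funext X u
    exact hput X u u HEq.rfl
  subst this
  rfl

/-- If `mapOut F.get` is injective at `X`, then `put` is its inverse. -/
theorem DLens.put_mapOut (F : DLens A B) {X : A}
    (hinj : Function.Injective (fun u : Out X => mapOut F.get u)) (w : Out X) :
    F.put X (mapOut F.get w) = w := by
  apply hinj
  exact F.putGet X (mapOut F.get w)

end Helpers

end LensPaper
namespace LensPaper

section MonoPart

variable {A : Type u} [Category.{u} A] {B : Type u} [Category.{u} B] (F : DLens A B)

/-- The category of pairs of objects of `A` with the same image under `F.get`,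
and pairs of morphisms with the same image. -/
def PairCat : Type u := {p : A × A // F.get.obj p.1 = F.get.obj p.2}

instance : Category.{u} (PairCat F) where
  Hom p q := {m : (p.1.1 ⟶ q.1.1) × (p.1.2 ⟶ q.1.2) //
    F.get.map m.1 = eqToHom p.2 ≫ F.get.map m.2 ≫ eqToHom q.2.symm}
  id p := ⟨(𝟙 _, 𝟙 _), by simp⟩
  comp {p q r} f g := ⟨(f.1.1 ≫ g.1.1, f.1.2 ≫ g.1.2), by
    simp [f.2, g.2]⟩
  id_comp f := by apply Subtype.ext; simp
  comp_id f := by apply Subtype.ext; simp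
  assoc f g h := by apply Subtype.ext; simp

/-- Extensionality for out-sets of the pair category: two morphisms out of `p`
agree as soon as their two projections agree. -/
theorem PairCat.out_ext {p : PairCat F} {u v : Out p}
    (h1 : (⟨u.1.1.1, u.2.1.1⟩ : Out p.1.1) = ⟨v.1.1.1, v.2.1.1⟩)
    (h2 : (⟨u.1.1.2, u.2.1.2⟩ : Out p.1.2) = ⟨v.1.1.2, v.2.1.2⟩) : u = v := by
  obtain ⟨⟨⟨y1, y2⟩, hy⟩, ⟨⟨f1, f2⟩, hf⟩⟩ := u
  obtain ⟨⟨⟨z1, z2⟩, hz⟩, ⟨⟨g1, g2⟩, hg⟩⟩ := v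
  dsimp at h1 h2
  obtain ⟨rfl, hh1⟩ := Sigma.mk.inj_iff.mp h1
  obtain ⟨rfl, hh2⟩ := Sigma.mk.inj_iff.mp h2
  cases eq_of_heq hh1
  cases eq_of_heq hh2
  rfl

end MonoPart

end LensPaper
namespace LensPaper

section MonoPart2

variable {A : Type u} [Category.{u} A] {B : Type u} [Category.{u} B] (F : DLens A B)

/-- The companion of a morphism out of `p.1.1` obtained via the put of `F`. -/
def pput₁ (p : PairCat F) (a : Out p.1.1) : Out p.1.2 :=
  F.put p.1.2 (Out.cast p.2 (mapOut F.get a))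

theorem pput₁_spec (p : PairCat F) (a : Out p.1.1) :
    mapOut F.get (pput₁ F p a) = Out.cast p.2 (mapOut F.get a) := F.putGet _ _

theorem pput₁_fst (p : PairCat F) (a : Out p.1.1) :
    F.get.obj a.1 = F.get.obj (pput₁ F p a).1 :=
  (congrArg Sigma.fst (pput₁_spec F p a)).symm

theorem pput₁_cond (p : PairCat F) (a : Out p.1.1) :
    F.get.map a.2 = eqToHom p.2 ≫ F.get.map (pput₁ F p a).2 ≫
      eqToHom (pput₁_fst F p a).symm := by
  have h := Out.snd_eq (pput₁_spec F p a)
  dsimp [mapOut, Out.cast] at h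
  rw [h]
  simp [mapOut]

theorem pput₁_id (p : PairCat F) : pput₁ F p (Out.id p.1.1) = Out.id p.1.2 := by
  have h : Out.cast p.2 (mapOut F.get (Out.id p.1.1)) = Out.id (F.get.obj p.1.2) := by
    rw [mapOut_id]
    exact Out.ext' p.2 (by simp [Out.cast, Out.id])
  rw [pput₁, h, F.putId]

theorem pput₁_comp (p : PairCat F) (a : Out p.1.1) (v : Out a.1) :
    pput₁ F p (a.comp v) =
      (pput₁ F p a).comp (pput₁ F ⟨(a.1, (pput₁ F p a).1), pput₁_fst F p a⟩ v) := by
  rw [pput₁, mapOut_comp]; erw [← Out.cast_comp]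
  have h₂ : (Out.cast p.2 (mapOut F.get a)).1 =
      F.get.obj (F.put p.1.2 (Out.cast p.2 (mapOut F.get a))).1 :=
    (congrArg Sigma.fst (F.putGet p.1.2 (Out.cast p.2 (mapOut F.get a)))).symm
  rw [F.putPut p.1.2 (Out.cast p.2 (mapOut F.get a)) (mapOut F.get v) h₂]
  rfl

/-- The first projection lens from the pair category. -/
def projLens₁ : DLens (PairCat F) A where
  get := { obj := fun p => p.1.1, map := fun m => m.1.1,
           map_id := fun p => rfl, map_comp := fun f g => rfl }
  put p a := ⟨⟨(a.1, (pput₁ F p a).1), pput₁_fst F p a⟩,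
    ⟨(a.2, (pput₁ F p a).2), pput₁_cond F p a⟩⟩
  putGet p a := rfl
  putId p := by
    apply PairCat.out_ext
    · rfl
    · show pput₁ F p (Out.id p.1.1) = Out.id p.1.2
      exact pput₁_id F p
  putPut p a v h := by
    have hv : Out.cast h v = v := by
      rw [show h = rfl from rfl, Out.cast_rfl]
    rw [hv]
    apply PairCat.out_ext
    · rfl
    · show pput₁ F p (a.comp v) =
        (pput₁ F p a).comp (pput₁ F ⟨(a.1, (pput₁ F p a).1), pput₁_fst F p a⟩ v)
      exact pput₁_comp F p a v

end MonoPart2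

end LensPaper
namespace LensPaper

section MonoPart3

variable {A : Type u} [Category.{u} A] {B : Type u} [Category.{u} B] (F : DLens A B)

/-- The companion of a morphism out of `p.1.2` obtained via the put of `F`. -/
def pput₂ (p : PairCat F) (a : Out p.1.2) : Out p.1.1 :=
  F.put p.1.1 (Out.cast p.2.symm (mapOut F.get a))

theorem pput₂_spec (p : PairCat F) (a : Out p.1.2) :
    mapOut F.get (pput₂ F p a) = Out.cast p.2.symm (mapOut F.get a) := F.putGet _ _

theorem pput₂_fst (p : PairCat F) (a : Out p.1.2) :
    F.get.obj a.1 = F.get.obj (pput₂ F p a).1 :=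
  (congrArg Sigma.fst (pput₂_spec F p a)).symm

theorem pput₂_cond (p : PairCat F) (a : Out p.1.2) :
    F.get.map (pput₂ F p a).2 = eqToHom p.2 ≫ F.get.map a.2 ≫
      eqToHom (pput₂_fst F p a) := by
  have h := Out.snd_eq (pput₂_spec F p a)
  dsimp [mapOut, Out.cast] at h
  rw [← Category.assoc, ← h]
  simp [mapOut]
  erw [eqToHom_trans, eqToHom_refl, Category.comp_id]

theorem pput₂_id (p : PairCat F) : pput₂ F p (Out.id p.1.2) = Out.id p.1.1 := by
  have h : Out.cast p.2.symm (mapOut F.get (Out.id p.1.2)) = Out.id (F.get.obj p.1.1) := by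
    rw [mapOut_id]
    exact Out.ext' p.2.symm (by simp [Out.cast, Out.id])
  rw [pput₂, h, F.putId]

theorem pput₂_comp (p : PairCat F) (a : Out p.1.2) (v : Out a.1) :
    pput₂ F p (a.comp v) =
      (pput₂ F p a).comp (pput₂ F ⟨((pput₂ F p a).1, a.1), (pput₂_fst F p a).symm⟩ v) := by
  rw [pput₂, mapOut_comp]; erw [← Out.cast_comp]
  have h₂ : (Out.cast p.2.symm (mapOut F.get a)).1 =
      F.get.obj (F.put p.1.1 (Out.cast p.2.symm (mapOut F.get a))).1 :=
    (congrArg Sigma.fst (F.putGet p.1.1 (Out.cast p.2.symm (mapOut F.get a)))).symm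
  rw [F.putPut p.1.1 (Out.cast p.2.symm (mapOut F.get a)) (mapOut F.get v) h₂]
  rfl

/-- The second projection lens from the pair category. -/
def projLens₂ : DLens (PairCat F) A where
  get := { obj := fun p => p.1.2, map := fun m => m.1.2,
           map_id := fun p => rfl, map_comp := fun f g => rfl }
  put p a := ⟨⟨((pput₂ F p a).1, a.1), (pput₂_fst F p a).symm⟩,
    ⟨((pput₂ F p a).2, a.2), pput₂_cond F p a⟩⟩
  putGet p a := rfl
  putId p := by
    apply PairCat.out_ext
    · show pput₂ F p (Out.id p.1.2) = Out.id p.1.1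
      exact pput₂_id F p
    · rfl
  putPut p a v h := by
    have hv : Out.cast h v = v := by
      rw [show h = rfl from rfl, Out.cast_rfl]
    rw [hv]
    apply PairCat.out_ext
    · show pput₂ F p (a.comp v) =
        (pput₂ F p a).comp (pput₂ F ⟨((pput₂ F p a).1, a.1), (pput₂_fst F p a).symm⟩ v)
      exact pput₂_comp F p a v
    · rfl

end MonoPart3

end LensPaper
namespace LensPaper

section MonoPart4

variable {A : Type u} [Category.{u} A] {B : Type u} [Category.{u} B] (F : DLens A B)

theorem proj_comp_eq : (projLens₁ F).comp F = (projLens₂ F).comp F := by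
  apply DLens.ext'
  · have hobj : ∀ p : PairCat F, ((projLens₁ F).comp F).get.obj p =
        ((projLens₂ F).comp F).get.obj p := fun p => p.2
    exact CategoryTheory.Functor.ext hobj (fun p q m => m.2)
  · intro p u u' hu
    have hu' : u' = Out.cast p.2 u := Out.heq_iff p.2 u u' hu
    subst hu'
    show (projLens₁ F).put p (F.put p.1.1 u) =
      (projLens₂ F).put p (F.put p.1.2 (Out.cast p.2 u))
    apply PairCat.out_ext
    · show F.put p.1.1 u = pput₂ F p (F.put p.1.2 (Out.cast p.2 u))
      rw [pput₂]; erw [F.putGet, Out.cast_cast,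
        show p.2.trans p.2.symm = rfl from rfl, Out.cast_rfl]
    · show pput₁ F p (F.put p.1.1 u) = F.put p.1.2 (Out.cast p.2 u)
      rw [pput₁]; erw [F.putGet]

theorem objInj_of_projEq (h : (projLens₁ F).get = (projLens₂ F).get) :
    Function.Injective F.get.obj := by
  intro X X' hX
  exact Functor.congr_obj h (⟨(X, X'), hX⟩ : PairCat F)

theorem outInj_of_projEq (h : (projLens₁ F).get = (projLens₂ F).get) (X : A) :
    Function.Injective (fun v : Out X => mapOut F.get v) := by
  intro v v' hm
  have htgt : F.get.obj v.1 = F.get.obj v'.1 := congrArg Sigma.fst hm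
  have hsnd := Out.snd_eq hm
  dsimp [mapOut] at hsnd
  have cond : F.get.map v.2 = eqToHom (rfl : F.get.obj X = F.get.obj X) ≫
      F.get.map v'.2 ≫ eqToHom htgt.symm := by
    rw [← hsnd]
    simp
    erw [eqToHom_trans, eqToHom_refl, Category.comp_id]
  let p₀ : PairCat F := ⟨(X, X), rfl⟩
  let q : PairCat F := ⟨(v.1, v'.1), htgt⟩
  let m : p₀ ⟶ q := ⟨(v.2, v'.2), cond⟩
  have hm' := Functor.congr_hom h m
  have hobj := Functor.congr_obj h q
  dsimp [projLens₁, projLens₂, p₀, q, m] at hm' hobj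
  apply Out.ext' hobj
  rw [hm']
  simp
  erw [eqToHom_trans, eqToHom_refl, eqToHom_refl]
  simp
end MonoPart4

end LensPaper
namespace LensPaper

section EpiPart

variable {A : Type u} [Category.{u} A] {B : Type u} [Category.{u} B] (F : DLens A B)

/-- The object-image of a lens is closed under outgoing morphisms. -/
theorem range_closed {b b' : B} (f : b ⟶ b') (hb : b ∈ Set.range F.get.obj) :
    b' ∈ Set.range F.get.obj := by
  obtain ⟨X, rfl⟩ := hb
  exact ⟨(F.put X ⟨b', f⟩).1, congrArg Sigma.fst (F.putGet X ⟨b', f⟩)⟩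

/-- Two copies of `B` glued along the cosieve generated by the image of `F`. -/
def GlueObj : Type u := B ⊕ {b : B // b ∉ Set.range F.get.obj}

/-- Projection to the underlying object of `B`. -/
def gπ : GlueObj F → B := Sum.elim _root_.id Subtype.val

/-- Which pairs of objects of the glued category may be connected by a morphism. -/
def GlueOk : GlueObj F → GlueObj F → Prop
  | .inl _, .inl _ => True
  | .inr _, .inr _ => True
  | .inl _, .inr _ => False
  | .inr _, .inl b => b ∈ Set.range F.get.obj

theorem GlueOk.refl (x : GlueObj F) : GlueOk F x x := by cases x <;> trivial

theorem GlueOk.trans {x y z : GlueObj F} (g : gπ F y ⟶ gπ F z)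
    (h1 : GlueOk F x y) (h2 : GlueOk F y z) : GlueOk F x z := by
  cases x <;> cases y <;> cases z
  · trivial
  · exact h2.elim
  · exact h1.elim
  · exact h1.elim
  · exact range_closed F g h1
  · exact h2.elim
  · exact h2
  · trivial

instance : Category.{u} (GlueObj F) where
  Hom x y := {f : gπ F x ⟶ gπ F y // GlueOk F x y}
  id x := ⟨𝟙 _, GlueOk.refl F x⟩
  comp {x y z} f g := ⟨f.1 ≫ g.1, GlueOk.trans F g.1 f.2 g.2⟩
  id_comp f := by apply Subtype.ext; simp
  comp_id f := by apply Subtype.ext; simp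
  assoc f g h := by apply Subtype.ext; simp

theorem glue_val_eqToHom {x y : GlueObj F} (h : x = y) :
    (eqToHom h).1 = eqToHom (congrArg (gπ F) h) := by subst h; rfl

@[simp] theorem glue_val_comp {x y z : GlueObj F} (f : x ⟶ y) (g : y ⟶ z) :
    (f ≫ g).1 = f.1 ≫ g.1 := rfl

@[simp] theorem glue_val_id (x : GlueObj F) : (𝟙 x : x ⟶ x).1 = 𝟙 (gπ F x) := rfl

theorem glue_out_ext {x : GlueObj F} {u v : Out x} (h1 : u.1 = v.1)
    (h2 : u.2.1 ≫ eqToHom (congrArg (gπ F) h1) = v.2.1) : u = v := by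
  obtain ⟨y, f⟩ := u
  obtain ⟨z, g⟩ := v
  dsimp at h1
  subst h1
  simp only [eqToHom_refl, Category.comp_id] at h2
  have : f = g := Subtype.ext h2
  rw [this]

/-- The first copy inclusion, as a lens. -/
def glueLens₁ : DLens B (GlueObj F) where
  get := { obj := .inl, map := fun f => ⟨f, trivial⟩,
           map_id := fun _ => rfl, map_comp := fun _ _ => rfl }
  put b u := ⟨gπ F u.1, u.2.1⟩
  putGet b u := by
    obtain ⟨y | t, f⟩ := u
    · apply glue_out_ext F rfl
      simp [mapOut, gπ]
      erw [eqToHom_refl, Category.comp_id]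
    · exact f.2.elim
  putId b := rfl
  putPut b u v h := by
    refine Out.ext' ?_ ?_
    · rfl
    · simp [Out.comp, Out.cast, glue_val_eqToHom, glue_val_comp]
      erw [glue_val_comp, glue_val_comp, glue_val_eqToHom, eqToHom_refl, eqToHom_refl]
      erw [Category.comp_id, Category.id_comp]
      rfl

end EpiPart

end LensPaper
namespace LensPaper

section EpiPart2

variable {A : Type u} [Category.{u} A] {B : Type u} [Category.{u} B] (F : DLens A B)

attribute [local instance] Classical.propDecidable

/-- The object part of the second copy inclusion. -/
noncomputable def ι₂obj (b : B) : GlueObj F :=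
  if h : b ∈ Set.range F.get.obj then .inl b else .inr ⟨b, h⟩

theorem gπ_ι₂ (b : B) : gπ F (ι₂obj F b) = b := by
  unfold ι₂obj; by_cases h : b ∈ Set.range F.get.obj <;> simp [h, gπ]

theorem ι₂obj_of_mem {b : B} (hb : b ∈ Set.range F.get.obj) : ι₂obj F b = .inl b :=
  dif_pos hb

theorem ι₂obj_of_not_mem {b : B} (hb : b ∉ Set.range F.get.obj) :
    ι₂obj F b = .inr ⟨b, hb⟩ := dif_neg hb

theorem ι₂ok {b b' : B} (f : b ⟶ b') : GlueOk F (ι₂obj F b) (ι₂obj F b') := by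
  by_cases hb : b ∈ Set.range F.get.obj
  · by_cases hb' : b' ∈ Set.range F.get.obj
    · rw [ι₂obj_of_mem F hb, ι₂obj_of_mem F hb']; trivial
    · exact absurd (range_closed F f hb) hb'
  · by_cases hb' : b' ∈ Set.range F.get.obj
    · rw [ι₂obj_of_not_mem F hb, ι₂obj_of_mem F hb']; exact hb'
    · rw [ι₂obj_of_not_mem F hb, ι₂obj_of_not_mem F hb']; trivial

/-- The get functor of the second copy inclusion. -/
noncomputable def glueGet₂ : B ⥤ GlueObj F where
  obj := ι₂obj F
  map {b b'} f := ⟨eqToHom (gπ_ι₂ F b) ≫ f ≫ eqToHom (gπ_ι₂ F b').symm, ι₂ok F f⟩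
  map_id b := by apply Subtype.ext; simp
  map_comp f g := by apply Subtype.ext; simp

theorem ι₂obj_fst (b : B) (u : Out (ι₂obj F b)) : ι₂obj F (gπ F u.1) = u.1 := by
  obtain ⟨y | t, f⟩ := u
  · have hy : y ∈ Set.range F.get.obj := by
      by_cases hb : b ∈ Set.range F.get.obj
      · exact range_closed F (eqToHom (gπ_ι₂ F b).symm ≫ f.1) hb
      · have h2 := f.2
        rw [ι₂obj_of_not_mem F hb] at h2
        exact h2
    exact ι₂obj_of_mem F hy
  · show ι₂obj F t.1 = .inr t
    rw [ι₂obj_of_not_mem F t.2]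

/-- The second copy inclusion, as a lens. -/
noncomputable def glueLens₂ : DLens B (GlueObj F) where
  get := glueGet₂ F
  put b u := ⟨gπ F u.1, eqToHom (gπ_ι₂ F b).symm ≫ u.2.1⟩
  putGet b u := by
    refine glue_out_ext F (ι₂obj_fst F b u) ?_
    simp [mapOut, glueGet₂, glue_val_comp, glue_val_eqToHom]
    erw [eqToHom_trans, eqToHom_refl, Category.comp_id]
  putId b := by
    refine Out.ext' (gπ_ι₂ F b) ?_
    simp [Out.id, glue_val_id, glueGet₂, eqToHom_trans]
  putPut b u v h := by
    refine Out.ext' rfl ?_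
    simp [Out.comp, Out.cast, glue_val_comp, glue_val_eqToHom]
    erw [eqToHom_trans_assoc, eqToHom_refl, eqToHom_refl, Category.comp_id, Category.id_comp,
      Category.assoc]
    rfl

theorem glue_comp_eq : F.comp (glueLens₁ F) = F.comp (glueLens₂ F) := by
  apply DLens.ext'
  · have hobj : ∀ X : A, (.inl (F.get.obj X) : GlueObj F) = ι₂obj F (F.get.obj X) :=
      fun X => (ι₂obj_of_mem F ⟨X, rfl⟩).symm
    refine CategoryTheory.Functor.ext hobj ?_
    intro X Y a
    apply Subtype.ext
    simp [DLens.comp, Functor.comp_map, glueLens₁, glueLens₂, glueGet₂, glue_val_comp, glue_val_eqToHom]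
    erw [glue_val_comp, glue_val_comp, glue_val_eqToHom, glue_val_eqToHom]
    simp
    erw [eqToHom_refl, eqToHom_refl]
    exact ((Category.id_comp _).trans (Category.comp_id _)).symm
  · intro X u u' hu
    have hh : (F.comp (glueLens₁ F)).get.obj X = (F.comp (glueLens₂ F)).get.obj X :=
      (ι₂obj_of_mem F ⟨X, rfl⟩).symm
    have hu' : u' = Out.cast hh u := Out.heq_iff hh u u' hu
    subst hu'
    show F.put X ((glueLens₁ F).put _ u) = F.put X ((glueLens₂ F).put _ (Out.cast hh u))
    congr 1
    refine Out.ext' rfl ?_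
    simp [glueLens₁, glueLens₂, Out.cast, glue_val_comp, glue_val_eqToHom]
    erw [eqToHom_trans_assoc, eqToHom_refl, eqToHom_refl]
    exact (Category.comp_id _).trans (Category.id_comp _).symm

theorem surj_of_glueEq (h : glueLens₁ F = glueLens₂ F) :
    Function.Surjective F.get.obj := by
  intro b
  by_contra hb
  have hb' : b ∉ Set.range F.get.obj := hb
  have hobj := Functor.congr_obj (congrArg DLens.get h) b
  have hobj' : (Sum.inl b : GlueObj F) = ι₂obj F b := hobj
  rw [ι₂obj_of_not_mem F hb'] at hobj'
  exact Sum.inl_ne_inr hobj'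

end EpiPart2

end LensPaper
namespace LensPaper

section Retraction

variable {A : Type u} [Category.{u} A] {B : Type u} [Category.{u} B] (F : DLens A B)
variable (objSurj : Function.Surjective F.get.obj)

/-- A choice of preimage object. -/
noncomputable def hinv (b : B) : A := (objSurj b).choose

theorem hinv_spec (b : B) : F.get.obj (hinv F objSurj b) = b := (objSurj b).choose_spec

/-- The put-lift of a morphism of `B` to a morphism out of the chosen preimage. -/
noncomputable def rlift {b b' : B} (f : b ⟶ b') : Out (hinv F objSurj b) :=
  F.put (hinv F objSurj b) (Out.cast (hinv_spec F objSurj b).symm ⟨b', f⟩)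

theorem rlift_spec {b b' : B} (f : b ⟶ b') :
    mapOut F.get (rlift F objSurj f) = Out.cast (hinv_spec F objSurj b).symm ⟨b', f⟩ :=
  F.putGet _ _

theorem rlift_fst {b b' : B} (f : b ⟶ b') :
    F.get.obj (rlift F objSurj f).1 = b' :=
  congrArg Sigma.fst (rlift_spec F objSurj f)

variable (objInj : Function.Injective F.get.obj)

include objInj in
theorem rlift_tgt {b b' : B} (f : b ⟶ b') :
    (rlift F objSurj f).1 = hinv F objSurj b' :=
  objInj ((rlift_fst F objSurj f).trans (hinv_spec F objSurj b').symm)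

theorem rlift_key {b b' : B} (f : b ⟶ b') :
    F.get.map ((rlift F objSurj f).2 ≫ eqToHom (rlift_tgt F objSurj objInj f)) =
      eqToHom (hinv_spec F objSurj b) ≫ f ≫ eqToHom (hinv_spec F objSurj b').symm := by
  have h := Out.snd_eq (rlift_spec F objSurj f)
  dsimp [mapOut, Out.cast] at h
  have h2 : F.get.map (rlift F objSurj f).2 =
      (eqToHom (hinv_spec F objSurj b) ≫ f) ≫
        eqToHom (congrArg Sigma.fst (rlift_spec F objSurj f)).symm := by
    rw [← h]; simp
    erw [eqToHom_trans, eqToHom_refl, Category.comp_id]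
  rw [F.get.map_comp, eqToHom_map, h2]
  simp
  erw [Category.assoc, Category.assoc, eqToHom_trans]

variable (outInj : ∀ X : A, Function.Injective (fun v : Out X => mapOut F.get v))

include outInj in
theorem get_faithful {X Y : A} {a a' : X ⟶ Y} (h : F.get.map a = F.get.map a') :
    a = a' := by
  have h2 : mapOut F.get ⟨Y, a⟩ = mapOut F.get ⟨Y, a'⟩ := by
    dsimp [mapOut]; rw [h]
  have h3 := outInj X h2
  obtain ⟨-, h4⟩ := Sigma.mk.inj_iff.mp h3
  exact eq_of_heq h4

/-- The inverse get functor. -/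
noncomputable def Hfun : B ⥤ A where
  obj := hinv F objSurj
  map {b b'} f := (rlift F objSurj f).2 ≫ eqToHom (rlift_tgt F objSurj objInj f)
  map_id b := by
    apply get_faithful F outInj
    rw [rlift_key F objSurj objInj]
    simp
  map_comp {b b' b''} f g := by
    apply get_faithful F outInj
    rw [rlift_key F objSurj objInj, F.get.map_comp,
      rlift_key F objSurj objInj, rlift_key F objSurj objInj]
    simp

theorem mapOut_Hfun {b : B} (w : Out b) :
    mapOut F.get (mapOut (Hfun F objSurj objInj outInj) w) =
      Out.cast (hinv_spec F objSurj b).symm w := by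
  refine Out.ext' (hinv_spec F objSurj w.1) ?_
  show F.get.map ((Hfun F objSurj objInj outInj).map w.2) ≫ _ = _
  rw [show (Hfun F objSurj objInj outInj).map w.2 =
    (rlift F objSurj w.2).2 ≫ eqToHom (rlift_tgt F objSurj objInj w.2) from rfl]
  erw [rlift_key F objSurj objInj]
  simp [Out.cast]
  erw [Category.assoc, Category.assoc, eqToHom_trans, eqToHom_refl, Category.comp_id]
  rfl

/-- The inverse (retraction) lens. -/
noncomputable def Rlens : DLens B A where
  get := Hfun F objSurj objInj outInj
  put b v := Out.cast (hinv_spec F objSurj b) (mapOut F.get v)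
  putGet b v := by
    apply outInj (hinv F objSurj b)
    show mapOut F.get _ = mapOut F.get v
    rw [mapOut_Hfun F objSurj objInj outInj, Out.cast_cast,
      show ((hinv_spec F objSurj b).trans (hinv_spec F objSurj b).symm) = rfl from rfl,
      Out.cast_rfl]
    rfl
  putId b := by
    show Out.cast (hinv_spec F objSurj b) (mapOut F.get (Out.id (hinv F objSurj b))) =
      Out.id b
    rw [mapOut_id]
    refine Out.ext' (hinv_spec F objSurj b) ?_
    simp [Out.cast, Out.id]
  putPut b u v h := by
    show Out.cast _ (mapOut F.get (u.comp v)) = _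
    rw [mapOut_comp]; erw [← Out.cast_comp]
    congr 1
    show mapOut F.get v =
      Out.cast (hinv_spec F objSurj (F.get.obj u.1)) (mapOut F.get (Out.cast h v))
    erw [mapOut_cast, Out.cast_cast,
      show ((congrArg F.get.obj h).trans (hinv_spec F objSurj (F.get.obj u.1))) = rfl from rfl,
      Out.cast_rfl]

theorem comp_Rlens : F.comp (Rlens F objSurj objInj outInj) = DLens.id A := by
  have hobjX : ∀ X : A, hinv F objSurj (F.get.obj X) = X :=
    fun X => objInj (hinv_spec F objSurj (F.get.obj X))
  apply DLens.ext'
  · refine CategoryTheory.Functor.ext hobjX ?_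
    intro X Y a
    apply get_faithful F outInj
    show F.get.map ((Hfun F objSurj objInj outInj).map (F.get.map a)) = _
    rw [show (Hfun F objSurj objInj outInj).map (F.get.map a) =
      (rlift F objSurj (F.get.map a)).2 ≫
        eqToHom (rlift_tgt F objSurj objInj (F.get.map a)) from rfl]
    erw [rlift_key F objSurj objInj]
    simp [eqToHom_map]
    erw [eqToHom_map]
    rfl
  · intro X u u' hu
    have hX : hinv F objSurj (F.get.obj X) = X := hobjX X
    have hu' : u' = Out.cast hX u := Out.heq_iff hX u u' hu
    subst hu'
    show F.put X (Out.cast (hinv_spec F objSurj (F.get.obj X)) (mapOut F.get u)) =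
      Out.cast hX u
    have hc : Out.cast (hinv_spec F objSurj (F.get.obj X)) (mapOut F.get u) =
        mapOut F.get (Out.cast hX u) := by
      erw [mapOut_cast]
    rw [hc]
    exact DLens.put_mapOut F (outInj X) _

end Retraction

end LensPaper

/-- Every lens that is both an epimorphism and a monomorphism
in `Lens` is an isomorphism. -/
theorem lens_epi_mono_isIso (A B : LensCat.{u}) (F : A ⟶ B)
    (hepi : Epi F) (hmono : Mono F) : IsIso F := by
  -- From `Mono F`, the get functor is injective on objects and on out-sets.
  let P : LensCat.{u} := LensCat.of (Cat.of (PairCat F))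
  let K₁ : P ⟶ A := projLens₁ F
  let K₂ : P ⟶ A := projLens₂ F
  have hK : K₁ ≫ F = K₂ ≫ F := proj_comp_eq F
  have hK' : K₁ = K₂ := hmono.right_cancellation K₁ K₂ hK
  have hget : (projLens₁ F).get = (projLens₂ F).get := congrArg DLens.get hK'
  have objInj : Function.Injective (DLens.get F).obj := objInj_of_projEq F hget
  have outInj : ∀ X, Function.Injective
      (fun v : Out X => mapOut (DLens.get F) v) := outInj_of_projEq F hget
  -- From `Epi F`, the get functor is surjective on objects.
  let C : LensCat.{u} := LensCat.of (Cat.of (GlueObj F))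
  let L₁ : B ⟶ C := glueLens₁ F
  let L₂ : B ⟶ C := glueLens₂ F
  have hL : F ≫ L₁ = F ≫ L₂ := glue_comp_eq F
  have hL' : L₁ = L₂ := hepi.left_cancellation L₁ L₂ hL
  have objSurj : Function.Surjective (DLens.get F).obj := surj_of_glueEq F hL'
  -- Build the retraction lens and conclude.
  let R : B ⟶ A := Rlens F objSurj objInj outInj
  have h1 : F ≫ R = 𝟙 A := comp_Rlens F objSurj objInj outInj
  have h2 : R ≫ F = 𝟙 B := by
    apply hepi.left_cancellation
    rw [← Category.assoc, h1, Category.id_comp, Category.comp_id]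
  exact ⟨R, h1, h2⟩
end

section
/- The get functor of every epimorphism in the category Lens is an effective epimorphism in Cat: if E : B → C is an epic lens, then U E is the coequaliser in Cat of its kernel pair (the two projections of the pullback of U E along itself). -/
universe u

open CategoryTheory CategoryTheory.Limits

open CategoryTheory CategoryTheory.Limits LensPaper

namespace S18

section PartA

variable {Bc : Type u} [Category.{u} Bc] {Cc : Type u} [Category.{u} Cc]

/-- Objects admitting a morphism from an object in the image of the get functor. -/
def inS (L : DLens Bc Cc) (c : Cc) : Prop := ∃ b : Bc, Nonempty (L.get.obj b ⟶ c)

lemma inS_closed {L : DLens Bc Cc} {c c' : Cc} (h : inS L c) (g : c ⟶ c') : inS L c' := by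
  obtain ⟨b, ⟨f⟩⟩ := h
  exact ⟨b, ⟨f ≫ g⟩⟩

noncomputable def bval (L : DLens Bc Cc) (i : Bool) (c : Cc) : Bool :=
  @ite _ (inS L c) (Classical.dec _) false i

lemma bval_pos {L : DLens Bc Cc} (i : Bool) {c : Cc} (h : inS L c) : bval L i c = false :=
  if_pos h

lemma bval_neg {L : DLens Bc Cc} (i : Bool) {c : Cc} (h : ¬ inS L c) : bval L i c = i :=
  if_neg h

lemma bval_true {L : DLens Bc Cc} {i : Bool} {c : Cc} (h : bval L i c = true) : ¬ inS L c := by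
  intro hS
  rw [bval_pos i hS] at h
  cases h

/-- The category obtained by gluing two copies of `Cc` along the cosieve `inS L`. -/
def DObj (L : DLens Bc Cc) : Type u := {p : Cc × Bool // p.2 = true → ¬ inS L p.1}

instance (L : DLens Bc Cc) : Category.{u} (DObj L) where
  Hom x y := {f : x.1.1 ⟶ y.1.1 // x.1.2 = y.1.2 ∨ inS L y.1.1}
  id x := ⟨𝟙 _, Or.inl rfl⟩
  comp f g := ⟨f.1 ≫ g.1, by
    rcases g.2 with h | h
    · rcases f.2 with h' | h'
      · exact Or.inl (h'.trans h)
      · exact Or.inr (inS_closed h' g.1)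
    · exact Or.inr h⟩
  id_comp f := Subtype.ext (Category.id_comp _)
  comp_id f := Subtype.ext (Category.comp_id _)
  assoc f g h := Subtype.ext (Category.assoc _ _ _)

lemma DObj.eqToHom_val {L : DLens Bc Cc} {x y : DObj L} (h : x = y) :
    (eqToHom h).1 = eqToHom (congrArg (fun d : DObj L => d.1.1) h) := by subst h; rfl

@[simp] lemma DObj.comp_val {L : DLens Bc Cc} {x y z : DObj L} (f : x ⟶ y) (g : y ⟶ z) :
    (f ≫ g).1 = f.1 ≫ g.1 := rfl

/-- The two coprojection lenses from `Cc` to the glued category. -/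
noncomputable def iota (L : DLens Bc Cc) (i : Bool) : DLens Cc (DObj L) where
  get := {
    obj := fun c => ⟨(c, bval L i c), fun ht => bval_true ht⟩
    map := fun {c c'} f => ⟨f, by
      by_cases h' : inS L c'
      · exact Or.inr h'
      · have hc : ¬ inS L c := fun hc => h' (inS_closed hc f)
        exact Or.inl ((bval_neg i hc).trans (bval_neg i h').symm)⟩
    map_id := fun c => Subtype.ext rfl
    map_comp := fun f g => Subtype.ext rfl }
  put X u := ⟨u.1.1.1, u.2.1⟩
  putGet X u := by
    obtain ⟨⟨⟨Y, j⟩, hY⟩, f⟩ := u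
    have hj : bval L i Y = j := by
      by_cases hS : inS L Y
      · rw [bval_pos i hS]
        cases j with
        | false => rfl
        | true => exact absurd hS (hY rfl)
      · rcases f.2 with h | h
        · have h2 : bval L i X = j := h
          have hX : ¬ inS L X := fun hc => hS (inS_closed hc f.1)
          rw [bval_neg i hX] at h2
          rw [bval_neg i hS]
          exact h2
        · exact absurd h hS
    subst hj
    rfl
  putId X := rfl
  putPut X u v h := by
    refine congrArg (fun m => (⟨v.1.1.1, m⟩ : Out X)) ?_
    show u.2.1 ≫ v.2.1 = u.2.1 ≫ ((eqToHom h.symm ≫ v.2).1)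
    rw [show (eqToHom h.symm ≫ v.2).1 = (eqToHom h.symm).1 ≫ v.2.1 from rfl,
      DObj.eqToHom_val]
    simp

theorem DLens.ext_heq {A : Type*} [Category A] {B' : Type*} [Category B'] {F G : DLens A B'}
    (h1 : F.get = G.get)
    (h2 : ∀ (X : A) (u : Out (F.get.obj X)) (v : Out (G.get.obj X)),
      HEq u v → F.put X u = G.put X v) : F = G := by
  obtain ⟨gF, pF, pg1, pi1, pp1⟩ := F
  obtain ⟨gG, pG, pg2, pi2, pp2⟩ := G
  dsimp at h1 h2
  subst h1
  have : pF = pG := funext fun X => funext fun u => h2 X u u HEq.rfl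
  subst this
  rfl

lemma strip_heq {L : DLens Bc Cc} {d₁ d₂ : DObj L} (hd : d₁ = d₂) {u : Out d₁} {v : Out d₂}
    (huv : HEq u v) :
    HEq (⟨u.1.1.1, u.2.1⟩ : Out d₁.1.1) (⟨v.1.1.1, v.2.1⟩ : Out d₂.1.1) := by
  subst hd
  rw [eq_of_heq huv]

/-- Epic lenses are surjective on objects. -/
theorem epi_surj {B C : LensCat.{u}} (E : B ⟶ C) (hE : Epi E) :
    ∀ c : ↥C.toCat, ∃ b : ↥B.toCat, (DLens.get E).obj b = c := by
  have hall : ∀ c : ↥C.toCat, inS (E : DLens ↥B.toCat ↥C.toCat) c := by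
    intro c
    by_contra hc
    set L : DLens ↥B.toCat ↥C.toCat := E with hL
    set DD : LensCat.{u} := Cat.of (DObj L) with hDD
    have hget : (DLens.comp L (iota L false)).get = (DLens.comp L (iota L true)).get := by
      have hobj : ∀ b : ↥B.toCat, ((DLens.comp L (iota L false)).get).obj b
          = ((DLens.comp L (iota L true)).get).obj b := by
        intro b
        have hS : inS L (L.get.obj b) := ⟨b, ⟨𝟙 _⟩⟩
        have hsnd : bval L false (L.get.obj b) = bval L true (L.get.obj b) := by
          rw [bval_pos _ hS, bval_pos _ hS]
        exact Subtype.ext (Prod.ext rfl hsnd)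
      refine CategoryTheory.Functor.ext hobj (fun b b' f => ?_)
      apply Subtype.ext
      rw [show (eqToHom (hobj b) ≫ (DLens.comp L (iota L true)).get.map f
            ≫ eqToHom (hobj b').symm).1
          = (eqToHom (hobj b)).1 ≫ ((DLens.comp L (iota L true)).get.map f).1
            ≫ (eqToHom (hobj b').symm).1 from rfl,
        DObj.eqToHom_val, DObj.eqToHom_val]
      show L.get.map f = _
      erw [eqToHom_refl, eqToHom_refl, Category.id_comp, Category.comp_id]
      rfl
    have hcomp : (DLens.comp L (iota L false)) = (DLens.comp L (iota L true)) := by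
      refine DLens.ext_heq hget (fun X u v huv => ?_)
      have hd : (iota L false).get.obj (L.get.obj X) = (iota L true).get.obj (L.get.obj X) :=
        CategoryTheory.Functor.congr_obj hget X
      exact congrArg (L.put X) (eq_of_heq (strip_heq hd huv))
    have hio : (iota L false : C ⟶ DD) = (iota L true : C ⟶ DD) :=
      hE.left_cancellation (Z := DD) _ _ hcomp
    have hval := congrArg (fun F : C ⟶ DD => ((DLens.get F).obj c).1.2) hio
    change bval L false c = bval L true c at hval
    rw [bval_neg _ hc, bval_neg _ hc] at hval
    cases hval
  intro c
  obtain ⟨b, ⟨f⟩⟩ := hall c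
  refine ⟨((E : DLens ↥B.toCat ↥C.toCat).put b ⟨c, f⟩).1, ?_⟩
  exact congrArg (fun p : Out ((DLens.get E).obj b) => p.1)
    ((E : DLens ↥B.toCat ↥C.toCat).putGet b ⟨c, f⟩)

end PartA

section PartB


/-- Kernel-pair category of a functor. -/
structure PB {Bc Cc : Type u} [Category.{u} Bc] [Category.{u} Cc] (Eg : Bc ⥤ Cc) : Type u where
  b₁ : Bc
  b₂ : Bc
  he : Eg.obj b₁ = Eg.obj b₂

variable {Bc Cc : Type u} [Category.{u} Bc] [Category.{u} Cc] (Eg : Bc ⥤ Cc)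

instance : Category.{u} (PB Eg) where
  Hom X Y := {p : (X.b₁ ⟶ Y.b₁) × (X.b₂ ⟶ Y.b₂) //
    Eg.map p.1 ≫ eqToHom Y.he = eqToHom X.he ≫ Eg.map p.2}
  id X := ⟨(𝟙 _, 𝟙 _), by simp⟩
  comp {X Y Z} f g := ⟨(f.1.1 ≫ g.1.1, f.1.2 ≫ g.1.2), by
    rw [Functor.map_comp, Functor.map_comp, Category.assoc, g.2, ← Category.assoc, f.2,
      Category.assoc]⟩
  id_comp f := Subtype.ext (Prod.ext (Category.id_comp _) (Category.id_comp _))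
  comp_id f := Subtype.ext (Prod.ext (Category.comp_id _) (Category.comp_id _))
  assoc f g h := Subtype.ext (Prod.ext (Category.assoc _ _ _) (Category.assoc _ _ _))

lemma PB.ext' {X Y : PB Eg} (h1 : X.b₁ = Y.b₁) (h2 : X.b₂ = Y.b₂) : X = Y := by
  cases X; cases Y; cases h1; cases h2; rfl

@[simp] lemma PB.id_val (X : PB Eg) : (𝟙 X : X ⟶ X).1 = (𝟙 X.b₁, 𝟙 X.b₂) := rfl

@[simp] lemma PB.comp_val {X Y Z : PB Eg} (f : X ⟶ Y) (g : Y ⟶ Z) :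
    (f ≫ g).1 = (f.1.1 ≫ g.1.1, f.1.2 ≫ g.1.2) := rfl

lemma PB.eqToHom_val₁ {X Y : PB Eg} (h : X = Y) :
    (eqToHom h).1.1 = eqToHom (congrArg PB.b₁ h) := by subst h; rfl

lemma PB.eqToHom_val₂ {X Y : PB Eg} (h : X = Y) :
    (eqToHom h).1.2 = eqToHom (congrArg PB.b₂ h) := by subst h; rfl

/-- First projection. -/
def PB.p1 : PB Eg ⥤ Bc where
  obj := PB.b₁
  map f := f.1.1

/-- Second projection. -/
def PB.p2 : PB Eg ⥤ Bc where
  obj := PB.b₂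
  map f := f.1.2

lemma PB.w : PB.p1 Eg ⋙ Eg = PB.p2 Eg ⋙ Eg := by
  have hobj : ∀ X : PB Eg, (PB.p1 Eg ⋙ Eg).obj X = (PB.p2 Eg ⋙ Eg).obj X := fun X => X.he
  refine CategoryTheory.Functor.ext hobj (fun X Y f => ?_)
  show Eg.map f.1.1 = eqToHom X.he ≫ Eg.map f.1.2 ≫ eqToHom Y.he.symm
  rw [← Category.assoc, ← f.2]
  simp


section PBLimit

variable {BB CC : Cat.{u, u}} (Eg : BB ⟶ CC)

/-- Lift functor into the kernel-pair category. -/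
def pbLift (s : PullbackCone (C := Cat.{u, u}) Eg Eg) : ↥s.pt ⥤ PB Eg.toFunctor where
  obj w := ⟨s.fst.toFunctor.obj w, s.snd.toFunctor.obj w, Functor.congr_obj (congrArg Cat.Hom.toFunctor s.condition) w⟩
  map {w w'} f := ⟨(s.fst.toFunctor.map f, s.snd.toFunctor.map f), by
    have h : Eg.toFunctor.map (s.fst.toFunctor.map f) =
        eqToHom (Functor.congr_obj (congrArg Cat.Hom.toFunctor s.condition) w) ≫ Eg.toFunctor.map (s.snd.toFunctor.map f) ≫
          eqToHom (Functor.congr_obj (congrArg Cat.Hom.toFunctor s.condition) w').symm :=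
      Functor.congr_hom (congrArg Cat.Hom.toFunctor s.condition) f
    rw [h]
    simp⟩
  map_id w := Subtype.ext (by simp)
  map_comp f g := Subtype.ext (by simp)

def KF1 : Cat.of (PB Eg.toFunctor) ⟶ BB := (PB.p1 Eg.toFunctor).toCatHom

def KF2 : Cat.of (PB Eg.toFunctor) ⟶ BB := (PB.p2 Eg.toFunctor).toCatHom

lemma pbw : KF1 Eg ≫ Eg = KF2 Eg ≫ Eg := Cat.Hom.ext (PB.w Eg.toFunctor)

/-- The kernel-pair category is a pullback in `Cat`. -/
def pbIsLimit : IsLimit (PullbackCone.mk _ _ (pbw Eg)) := by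
  refine PullbackCone.IsLimit.mk _ (fun s => ((pbLift Eg s).toCatHom : s.pt ⟶ Cat.of (PB Eg.toFunctor)))
    (fun s => rfl) (fun s => rfl) (fun s m hm1 hm2 => ?_)
  apply Cat.Hom.ext
  have hobj : ∀ w : ↥s.pt, m.toFunctor.obj w = (pbLift Eg s).obj w := fun w =>
    PB.ext' _ (Functor.congr_obj (congrArg Cat.Hom.toFunctor hm1) w)
      (Functor.congr_obj (congrArg Cat.Hom.toFunctor hm2) w)
  refine CategoryTheory.Functor.ext hobj (fun w w' f => ?_)
  apply Subtype.ext
  apply Prod.ext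
  · show (m.toFunctor.map f).1.1 = (eqToHom (hobj w) ≫ (pbLift Eg s).map f ≫ eqToHom (hobj w').symm).1.1
    rw [show (eqToHom (hobj w) ≫ (pbLift Eg s).map f ≫ eqToHom (hobj w').symm).1.1
        = (eqToHom (hobj w)).1.1 ≫ ((pbLift Eg s).map f).1.1 ≫ (eqToHom (hobj w').symm).1.1
        from rfl]
    erw [PB.eqToHom_val₁, PB.eqToHom_val₁]
    exact Functor.congr_hom (congrArg Cat.Hom.toFunctor hm1) f
  · show (m.toFunctor.map f).1.2 = (eqToHom (hobj w) ≫ (pbLift Eg s).map f ≫ eqToHom (hobj w').symm).1.2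
    rw [show (eqToHom (hobj w) ≫ (pbLift Eg s).map f ≫ eqToHom (hobj w').symm).1.2
        = (eqToHom (hobj w)).1.2 ≫ ((pbLift Eg s).map f).1.2 ≫ (eqToHom (hobj w').symm).1.2
        from rfl]
    erw [PB.eqToHom_val₂, PB.eqToHom_val₂]
    exact Functor.congr_hom (congrArg Cat.Hom.toFunctor hm2) f

end PBLimit


end PartB

section PartC

variable {Bc : Type*} [Category Bc] {Cc : Type*} [Category Cc] {Dc : Type*} [Category Dc]

theorem Out_snd' {X : Bc} {p q : Out X} (h : p = q) :
    p.2 = q.2 ≫ eqToHom (congrArg (fun r : Out X => r.1) h).symm := by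
  subst h; simp

lemma cast_out_id {X Y : Cc} (h : X = Y) : Out.cast h (Out.id X) = Out.id Y := by
  subst h; exact Out.cast_rfl _

lemma put_fst (E : DLens Bc Cc) (b : Bc) (u : Out (E.get.obj b)) :
    E.get.obj (E.put b u).1 = u.1 :=
  congrArg (fun p : Out _ => p.1) (E.putGet b u)

lemma put_snd (E : DLens Bc Cc) (b : Bc) (u : Out (E.get.obj b)) :
    E.get.map (E.put b u).2 = u.2 ≫ eqToHom (put_fst E b u).symm :=
  Out_snd' (E.putGet b u)

variable (E : DLens Bc Cc) (G : Bc ⥤ Dc) (σ : Cc → Bc)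
  (hσ : ∀ c, E.get.obj (σ c) = c)
  (hob : ∀ {b b' : Bc}, E.get.obj b = E.get.obj b' → G.obj b = G.obj b')
  (hmor : ∀ {b₁ b₂ b₁' b₂' : Bc} (f₁ : b₁ ⟶ b₁') (f₂ : b₂ ⟶ b₂')
      (e : E.get.obj b₁ = E.get.obj b₂) (e' : E.get.obj b₁' = E.get.obj b₂'),
      E.get.map f₁ ≫ eqToHom e' = eqToHom e ≫ E.get.map f₂ →
      G.map f₁ = eqToHom (hob e) ≫ G.map f₂ ≫ eqToHom (hob e').symm)

/-- The functor induced on the quotient by a functor coequalising the kernel pair. -/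
noncomputable def descF : Cc ⥤ Dc where
  obj c := G.obj (σ c)
  map {c c'} g := G.map (E.put (σ c) ⟨c', eqToHom (hσ c) ≫ g⟩).2 ≫
    eqToHom (hob ((put_fst E (σ c) ⟨c', eqToHom (hσ c) ≫ g⟩).trans (hσ c').symm))
  map_id c := by
    have hv : E.put (σ c) ⟨c, eqToHom (hσ c) ≫ 𝟙 c⟩ = Out.id (σ c) := by
      have hcast : (⟨c, eqToHom (hσ c) ≫ 𝟙 c⟩ : Out (E.get.obj (σ c)))
          = Out.cast (hσ c).symm (Out.id c) := rfl
      rw [hcast, cast_out_id (hσ c).symm, E.putId]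
    rw [Out_snd' hv]
    simp only [Out.id, Category.id_comp, eqToHom_map, eqToHom_trans, eqToHom_refl]
    erw [eqToHom_map, eqToHom_trans, eqToHom_refl]
  map_comp {c c' c''} g g' := by
    have hfst : (⟨c', eqToHom (hσ c) ≫ g⟩ : Out (E.get.obj (σ c))).1
        = E.get.obj (E.put (σ c) ⟨c', eqToHom (hσ c) ≫ g⟩).1 :=
      (put_fst E (σ c) _).symm
    have harg : (⟨c'', eqToHom (hσ c) ≫ (g ≫ g')⟩ : Out (E.get.obj (σ c)))
        = Out.comp ⟨c', eqToHom (hσ c) ≫ g⟩ ⟨c'', g'⟩ := by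
      show _ = (⟨c'', (eqToHom (hσ c) ≫ g) ≫ g'⟩ : Out (E.get.obj (σ c)))
      rw [Category.assoc]
    have hv : E.put (σ c) ⟨c'', eqToHom (hσ c) ≫ (g ≫ g')⟩
        = Out.comp (E.put (σ c) ⟨c', eqToHom (hσ c) ≫ g⟩)
            (E.put (E.put (σ c) ⟨c', eqToHom (hσ c) ≫ g⟩).1 (Out.cast hfst ⟨c'', g'⟩)) := by
      rw [harg]
      exact E.putPut (σ c) ⟨c', eqToHom (hσ c) ≫ g⟩ ⟨c'', g'⟩ hfst
    have e : E.get.obj (E.put (σ c) ⟨c', eqToHom (hσ c) ≫ g⟩).1 = E.get.obj (σ c') :=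
      (put_fst E (σ c) _).trans (hσ c').symm
    have e' : E.get.obj
          (E.put (E.put (σ c) ⟨c', eqToHom (hσ c) ≫ g⟩).1 (Out.cast hfst ⟨c'', g'⟩)).1
        = E.get.obj (E.put (σ c') ⟨c'', eqToHom (hσ c') ≫ g'⟩).1 :=
      (put_fst E _ (Out.cast hfst ⟨c'', g'⟩)).trans
        (put_fst E (σ c') ⟨c'', eqToHom (hσ c') ≫ g'⟩).symm
    have hcond : E.get.map
          (E.put (E.put (σ c) ⟨c', eqToHom (hσ c) ≫ g⟩).1 (Out.cast hfst ⟨c'', g'⟩)).2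
          ≫ eqToHom e'
        = eqToHom e ≫ E.get.map (E.put (σ c') ⟨c'', eqToHom (hσ c') ≫ g'⟩).2 := by
      rw [put_snd, put_snd E (σ c') ⟨c'', eqToHom (hσ c') ≫ g'⟩]
      rw [show (Out.cast hfst (⟨c'', g'⟩ : Out c')).2 = eqToHom hfst.symm ≫ g' from rfl]
      erw [Category.assoc, Category.assoc, eqToHom_trans]
      show _ = eqToHom e ≫ (eqToHom _ ≫ g') ≫ eqToHom _
      erw [Category.assoc, ← Category.assoc (eqToHom e), eqToHom_trans]
      rfl
    have hkey := hmor _ _ e e' hcond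
    rw [Out_snd' hv]
    simp only [Out.comp, Functor.map_comp, Category.assoc, eqToHom_map]
    rw [hkey]
    simp
    erw [eqToHom_map, eqToHom_trans, eqToHom_trans]


/-- The descent functor factors the coequalising functor. -/
theorem descF_fac : E.get ⋙ descF E G σ hσ hob @hmor = G := by
  have hobj : ∀ b : Bc, (E.get ⋙ descF E G σ hσ hob @hmor).obj b = G.obj b :=
    fun b => hob (hσ (E.get.obj b))
  refine CategoryTheory.Functor.ext hobj (fun b b' f => ?_)
  have e : E.get.obj (σ (E.get.obj b)) = E.get.obj b := hσ (E.get.obj b)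
  have e' : E.get.obj (E.put (σ (E.get.obj b))
      ⟨E.get.obj b', eqToHom (hσ (E.get.obj b)) ≫ E.get.map f⟩).1 = E.get.obj b' :=
    put_fst E _ _
  have hcond : E.get.map (E.put (σ (E.get.obj b))
        ⟨E.get.obj b', eqToHom (hσ (E.get.obj b)) ≫ E.get.map f⟩).2 ≫ eqToHom e'
      = eqToHom e ≫ E.get.map f := by
    rw [put_snd E _ ⟨E.get.obj b', eqToHom (hσ (E.get.obj b)) ≫ E.get.map f⟩]
    simp only [Category.assoc, eqToHom_trans]
    erw [eqToHom_refl, Category.comp_id]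
  have hkey := hmor _ _ e e' hcond
  show (descF E G σ hσ hob @hmor).map (E.get.map f) = _
  show G.map (E.put (σ (E.get.obj b))
      ⟨E.get.obj b', eqToHom (hσ (E.get.obj b)) ≫ E.get.map f⟩).2 ≫ eqToHom _ = _
  rw [hkey]
  simp
  rfl

/-- The descent functor is unique. -/
theorem descF_uniq (m : Cc ⥤ Dc) (hm : E.get ⋙ m = G) : m = descF E G σ hσ hob @hmor := by
  have hobj : ∀ c : Cc, m.obj c = (descF E G σ hσ hob @hmor).obj c := fun c =>
    (congrArg m.obj (hσ c)).symm.trans (Functor.congr_obj hm (σ c))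
  refine CategoryTheory.Functor.ext hobj (fun c c' gg => ?_)
  have hg : gg = eqToHom (hσ c).symm
      ≫ E.get.map (E.put (σ c) ⟨c', eqToHom (hσ c) ≫ gg⟩).2
      ≫ eqToHom (put_fst E (σ c) ⟨c', eqToHom (hσ c) ≫ gg⟩) := by
    rw [put_snd E (σ c) ⟨c', eqToHom (hσ c) ≫ gg⟩]
    simp
  have hmm := Functor.congr_hom hm (E.put (σ c) ⟨c', eqToHom (hσ c) ≫ gg⟩).2
  rw [Functor.comp_map] at hmm
  conv_lhs => rw [hg]
  rw [m.map_comp, m.map_comp, eqToHom_map, eqToHom_map, hmm]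
  show _ = eqToHom (hobj c) ≫ (G.map (E.put (σ c) ⟨c', eqToHom (hσ c) ≫ gg⟩).2
      ≫ eqToHom _) ≫ eqToHom (hobj c').symm
  simp
  erw [Category.assoc, eqToHom_trans]
  rfl

end PartC


end S18

/-- The get functor of every epimorphism in `Lens` is an
effective epimorphism in `Cat`: if `E` is an epic lens, then `U E` has a kernel
pair (the pullback of `U E` along itself) and `U E` is the coequaliser in `Cat`
of its kernel pair. -/
theorem epic_lens_get_effective_epi (B C : LensCat.{u}) (E : B ⟶ C) (hE : Epi E) :
    ∃ (K : Cat.{u, u}) (F1 F2 : K ⟶ B.toCat)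
      (hpb : IsPullback F1 F2 (lensForget.map E) (lensForget.map E)),
      Nonempty (IsColimit (Cofork.ofπ (lensForget.map E) hpb.w)) := by
  classical
  obtain ⟨σ, hσ⟩ : ∃ σ : ↥C.toCat → ↥B.toCat, ∀ c, (DLens.get E).obj (σ c) = c := by
    choose σ hσ using S18.epi_surj E hE
    exact ⟨σ, hσ⟩
  refine ⟨Cat.of (S18.PB (lensForget.map E).toFunctor),
    S18.KF1 (lensForget.map E), S18.KF2 (lensForget.map E),
    IsPullback.of_isLimit (S18.pbIsLimit (lensForget.map E)), ?_⟩
  refine ⟨Cofork.IsColimit.mk _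
    (fun s => (S18.descF (E : DLens ↥B.toCat ↥C.toCat) s.π.toFunctor σ hσ
      (fun {b b'} e => Functor.congr_obj (congrArg Cat.Hom.toFunctor s.condition)
        (⟨b, b', e⟩ : S18.PB (lensForget.map E).toFunctor))
      (fun {b₁ b₂ b₁' b₂'} f₁ f₂ e e' hc =>
        Functor.congr_hom (congrArg Cat.Hom.toFunctor s.condition)
          (X := (⟨b₁, b₂, e⟩ : S18.PB (lensForget.map E).toFunctor))
          (Y := (⟨b₁', b₂', e'⟩ : S18.PB (lensForget.map E).toFunctor))
          ⟨(f₁, f₂), hc⟩)).toCatHom)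
    (fun s => ?_) (fun s m hm => ?_)⟩
  · refine Cat.Hom.ext ?_
    exact S18.descF_fac (E : DLens ↥B.toCat ↥C.toCat) s.π.toFunctor σ hσ
      (fun {b b'} e => Functor.congr_obj (congrArg Cat.Hom.toFunctor s.condition)
        (⟨b, b', e⟩ : S18.PB (lensForget.map E).toFunctor))
      (fun {b₁ b₂ b₁' b₂'} f₁ f₂ e e' hc =>
        Functor.congr_hom (congrArg Cat.Hom.toFunctor s.condition)
          (X := (⟨b₁, b₂, e⟩ : S18.PB (lensForget.map E).toFunctor))
          (Y := (⟨b₁', b₂', e'⟩ : S18.PB (lensForget.map E).toFunctor))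
          ⟨(f₁, f₂), hc⟩)
  · exact Cat.Hom.ext (S18.descF_uniq (E : DLens ↥B.toCat ↥C.toCat) s.π.toFunctor σ hσ
      (fun {b b'} e => Functor.congr_obj (congrArg Cat.Hom.toFunctor s.condition)
        (⟨b, b', e⟩ : S18.PB (lensForget.map E).toFunctor))
      (fun {b₁ b₂ b₁' b₂'} f₁ f₂ e e' hc =>
        Functor.congr_hom (congrArg Cat.Hom.toFunctor s.condition)
          (X := (⟨b₁, b₂, e⟩ : S18.PB (lensForget.map E).toFunctor))
          (Y := (⟨b₁', b₂', e'⟩ : S18.PB (lensForget.map E).toFunctor))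
          ⟨(f₁, f₂), hc⟩) m.toFunctor (congrArg Cat.Hom.toFunctor hm))
end
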